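/- Suppose f is L-smooth, bounded below by f_inf, and the stochastic gradient g is unbiased and satisfies E‖g(x)‖² ≤ 2A(f(x) − f_inf) + B‖∇f(x)‖² + C. For SGD x_{k+1} = x_k − γg(x_k) with constant stepsize 0 < γ ≤ 1/(BL), one has min_{0≤k≤K−1} E‖∇f(x_k)‖² ≤ LCγ + 2(1 + Lγ²A)^K (f(x₀) − f_inf)/(γK). -/

import Mathlib

open MeasureTheory
open scoped BigOperators

section Aux
open InnerProductSpace Finset

variable {E' : Type*} [NormedAddCommGroup E'] [InnerProductSpace ℝ E'] [CompleteSpace E']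

theorem sgd_descent {f : E' → ℝ} {L : ℝ} (hL : 0 ≤ L)
    (hdiff : Differentiable ℝ f)
    (hlip : ∀ x y, ‖gradient f x - gradient f y‖ ≤ L * ‖x - y‖) (x y : E') :
    f y ≤ f x + ⟪gradient f x, y - x⟫_ℝ + L / 2 * ‖y - x‖ ^ 2 := by
  have hgc : Continuous (gradient f) :=
    (LipschitzWith.of_dist_le_mul (K := ⟨L, hL⟩) (fun a b => by
      rw [dist_eq_norm, dist_eq_norm]; exact hlip a b)).continuous
  set v := y - x with hv
  have hy : y = x + v := by rw [hv]; abel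
  have hcv : Continuous fun t : ℝ => x + t • v :=
    continuous_const.add (continuous_id.smul continuous_const)
  have hderiv : ∀ t : ℝ, HasDerivAt (fun t : ℝ => f (x + t • v))
      ⟪gradient f (x + t • v), v⟫_ℝ t := by
    intro t
    have h1 : HasFDerivAt f (toDualMap ℝ E' (gradient f (x + t • v))) (x + t • v) := by
      have := (hdiff (x + t • v)).hasGradientAt
      rwa [hasGradientAt_iff_hasFDerivAt] at this
    have h2 : HasDerivAt (fun t : ℝ => x + t • v) v t := by
      simpa using ((hasDerivAt_id t).smul_const v).const_add x
    exact (h1.comp_hasDerivAt t h2)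
  have hcont : Continuous fun t : ℝ => ⟪gradient f (x + t • v), v⟫_ℝ :=
    (hgc.comp hcv).inner continuous_const
  have hint : f (x + (1:ℝ) • v) - f (x + (0:ℝ) • v) =
      ∫ t in (0:ℝ)..1, ⟪gradient f (x + t • v), v⟫_ℝ := by
    rw [intervalIntegral.integral_eq_sub_of_hasDerivAt (fun t _ => hderiv t)
      (hcont.intervalIntegrable 0 1)]
  simp only [one_smul, zero_smul, add_zero] at hint
  have key : ∫ t in (0:ℝ)..1, ⟪gradient f (x + t • v) - gradient f x, v⟫_ℝ
      = (∫ t in (0:ℝ)..1, ⟪gradient f (x + t • v), v⟫_ℝ) - ⟪gradient f x, v⟫_ℝ := by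
    simp_rw [inner_sub_left]
    rw [intervalIntegral.integral_sub (hcont.intervalIntegrable 0 1)
      intervalIntegrable_const]
    simp
  have bound : ∫ t in (0:ℝ)..1, ⟪gradient f (x + t • v) - gradient f x, v⟫_ℝ ≤
      ∫ t in (0:ℝ)..1, t * (L * ‖v‖ ^ 2) := by
    apply intervalIntegral.integral_mono_on zero_le_one
    · exact (((hgc.comp hcv).sub continuous_const).inner
        continuous_const).intervalIntegrable 0 1
    · exact (continuous_id.mul continuous_const).intervalIntegrable 0 1
    · intro t ht
      calc ⟪gradient f (x + t • v) - gradient f x, v⟫_ℝ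
          ≤ ‖gradient f (x + t • v) - gradient f x‖ * ‖v‖ := real_inner_le_norm _ _
        _ ≤ (L * ‖x + t • v - x‖) * ‖v‖ :=
            mul_le_mul_of_nonneg_right (hlip _ _) (norm_nonneg v)
        _ = t * (L * ‖v‖ ^ 2) := by
            rw [add_sub_cancel_left, norm_smul, Real.norm_eq_abs,
              abs_of_nonneg ht.1]; ring
  have hI : ∫ t in (0:ℝ)..1, t * (L * ‖v‖ ^ 2) = L / 2 * ‖v‖ ^ 2 := by
    rw [intervalIntegral.integral_mul_const, integral_id]; ring
  have hfy : f y = f (x + v) := congrArg f hy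
  rw [hfy]
  rw [hI, key] at bound
  linarith

theorem sgd_min_extract {r c γ : ℝ} (hr : 1 ≤ r) (hγ : 0 < γ)
    (δ E : ℕ → ℝ) (hδ : ∀ k, 0 ≤ δ k)
    (hrec : ∀ k, δ (k + 1) ≤ r * δ k - γ / 2 * E k + c)
    (K : ℕ) (hK : 0 < K) :
    ∃ k < K, E k ≤ 2 * c / γ + 2 * r ^ K * δ 0 / (γ * K) := by
  have hr0 : 0 ≤ r := le_trans zero_le_one hr
  have htel : ∀ N : ℕ, γ / 2 * (∑ k ∈ range N, r ^ (N - 1 - k) * E k) + δ N ≤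
      r ^ N * δ 0 + c * ∑ k ∈ range N, r ^ (N - 1 - k) := by
    intro N
    induction N with
    | zero => simp
    | succ N ih =>
      have hpow : ∀ k ∈ range N, r ^ (N + 1 - 1 - k) = r * r ^ (N - 1 - k) := by
        intro k hk
        rw [mem_range] at hk
        rw [← pow_succ']
        congr 1
        omega
      have hpow2 : ∀ k ∈ range N, r ^ (N + 1 - 1 - k) * E k = r * (r ^ (N - 1 - k) * E k) := by
        intro k hk; rw [hpow k hk]; ring
      rw [sum_range_succ, sum_range_succ, sum_congr rfl hpow,
        sum_congr rfl hpow2]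
      have h1 : γ / 2 * (∑ k ∈ range N, r * (r ^ (N - 1 - k) * E k)) =
          r * (γ / 2 * ∑ k ∈ range N, r ^ (N - 1 - k) * E k) := by
        rw [← mul_sum]; ring
      have h2 := hrec N
      have h3 := mul_le_mul_of_nonneg_left ih hr0
      simp only [Nat.add_sub_cancel, Nat.sub_self, pow_zero, one_mul] at *
      have heq : ∑ k ∈ range N, r * (r ^ (N - 1 - k) * E k)
          = ∑ k ∈ range N, r * r ^ (N - 1 - k) * E k := by
        apply sum_congr rfl; intros; ring
      rw [heq] at h1
      rw [mul_add, mul_add] at h3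
      have hps : r ^ (N + 1) = r * r ^ N := by rw [pow_succ']
      have hs2 : ∑ k ∈ range N, r * r ^ (N - 1 - k) =
          r * ∑ k ∈ range N, r ^ (N - 1 - k) := by rw [mul_sum]
      rw [mul_add, hps, hs2]
      ring_nf at h1 h2 h3 heq ⊢
      linarith [h1, h2, h3, heq]
  obtain ⟨k₀, hk₀K, hk₀min⟩ := exists_min_image (range K) E (by
    exact ⟨0, mem_range.mpr hK⟩)
  rw [mem_range] at hk₀K
  refine ⟨k₀, hk₀K, ?_⟩
  set W : ℝ := ∑ k ∈ range K, r ^ (K - 1 - k) with hW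
  have hWK : (K : ℝ) ≤ W := by
    calc (K : ℝ) = ∑ k ∈ range K, (1 : ℝ) := by simp
      _ ≤ W := sum_le_sum fun k _ => one_le_pow₀ hr
  have hWpos : 0 < W := lt_of_lt_of_le (by exact_mod_cast hK) hWK
  have hSge : W * E k₀ ≤ ∑ k ∈ range K, r ^ (K - 1 - k) * E k := by
    rw [hW, sum_mul]
    refine sum_le_sum fun k hk => ?_
    exact mul_le_mul_of_nonneg_left (hk₀min k hk) (pow_nonneg hr0 _)
  have h := htel K
  have hmain : γ / 2 * (W * E k₀) ≤ r ^ K * δ 0 + c * W := by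
    nlinarith [hδ K, hSge, mul_le_mul_of_nonneg_left hSge (by positivity : (0:ℝ) ≤ γ / 2)]
  have hEk : E k₀ ≤ 2 * (r ^ K * δ 0) / (γ * W) + 2 * c / γ := by
    rw [div_add_div _ _ (by positivity) hγ.ne']
    rw [le_div_iff₀ (by positivity)]
    ring_nf
    nlinarith [hmain, hWpos, hγ]
  refine le_trans hEk ?_
  have h9 : 2 * (r ^ K * δ 0) / (γ * W) ≤ 2 * (r ^ K * δ 0) / (γ * K) :=
    div_le_div_of_nonneg_left
      (by nlinarith [pow_nonneg hr0 K, hδ 0]) (by positivity)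
      (mul_le_mul_of_nonneg_left hWK (le_of_lt hγ))
  have h10 : 2 * (r ^ K * δ 0) / (γ * K) = 2 * r ^ K * δ 0 / (γ * K) := by ring_nf
  linarith

variable {Ω : Type*} {m m0 : MeasurableSpace Ω} {μ : Measure Ω}
variable {G F : Type*} [NormedAddCommGroup G] [NormedSpace ℝ G] [CompleteSpace G]
  [NormedAddCommGroup F] [NormedSpace ℝ F] [CompleteSpace F]

theorem sgd_integrable_inner_of_memL2 {E : Type*} [NormedAddCommGroup E]
    [InnerProductSpace ℝ E] {a b : Ω → E} (ha : MemLp a 2 μ) (hb : MemLp b 2 μ) :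
    Integrable (fun ω => ⟪a ω, b ω⟫_ℝ) μ := by
  have h := L2.integrable_inner (𝕜 := ℝ) (ha.toLp a) (hb.toLp b)
  refine h.congr ?_
  filter_upwards [ha.coeFn_toLp, hb.coeFn_toLp] with ω h1 h2
  rw [h1, h2]

theorem sgd_condexp_clm_comp (hm : m ≤ m0) [SigmaFinite (μ.trim hm)] (T : G →L[ℝ] F)
    {g : Ω → G} (hg : Integrable g μ) :
    (fun ω => T ((μ[g|m]) ω)) =ᵐ[μ] μ[fun ω => T (g ω)|m] := by
  refine ae_eq_condExp_of_forall_setIntegral_eq hm (T.integrable_comp hg) ?_ ?_ ?_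
  · intro s _ _
    exact (T.integrable_comp integrable_condExp).integrableOn
  · intro s hs hμs
    have h1 : ∫ ω in s, T ((μ[g|m]) ω) ∂μ = T (∫ ω in s, (μ[g|m]) ω ∂μ) :=
      T.integral_comp_comm integrable_condExp.integrableOn
    have h2 : ∫ ω in s, T (g ω) ∂μ = T (∫ ω in s, g ω ∂μ) :=
      T.integral_comp_comm hg.integrableOn
    rw [h1, h2, setIntegral_condExp hm hg hs]
  · exact StronglyMeasurable.aestronglyMeasurable
      (T.continuous.comp_stronglyMeasurable stronglyMeasurable_condExp)

end Aux

open InnerProductSpace in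
theorem stmt11 {d : ℕ} {Ω : Type*} [MeasureSpace Ω]
    [IsProbabilityMeasure (volume : Measure Ω)]
    (f : EuclideanSpace ℝ (Fin d) → ℝ) (L finf A B C : ℝ)
    (hL : 0 < L) (hA : 0 ≤ A) (hB : 0 ≤ B) (hC : 0 ≤ C)
    (hdiff : Differentiable ℝ f)
    (hlip : ∀ x y, ‖gradient f x - gradient f y‖ ≤ L * ‖x - y‖)
    (hbd : ∀ x, finf ≤ f x)
    (γ : ℝ) (hγ0 : 0 < γ) (hγB : γ ≤ 1 / (B * L))
    (x g : ℕ → Ω → EuclideanSpace ℝ (Fin d))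
    (x0 : EuclideanSpace ℝ (Fin d)) (hx0 : ∀ ω, x 0 ω = x0)
    (hupd : ∀ k ω, x (k + 1) ω = x k ω - γ • g k ω)
    (hxm : ∀ k, Measurable (x k)) (hgm : ∀ k, Measurable (g k))
    (hg2 : ∀ k, MemLp (g k) 2 volume)
    (hfint : ∀ k, Integrable (fun ω => f (x k ω)) volume)
    (hunb : ∀ k,
      (volume[g k | MeasurableSpace.comap (x k) (by infer_instance)])
        =ᵐ[volume] fun ω => gradient f (x k ω))
    (hES : ∀ k, ∀ᵐ ω ∂volume,
      (volume[(fun ω' => ‖g k ω'‖ ^ 2) | MeasurableSpace.comap (x k) (by infer_instance)]) ω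
        ≤ 2 * A * (f (x k ω) - finf) + B * ‖gradient f (x k ω)‖ ^ 2 + C)
    (K : ℕ) (hK : 0 < K) :
    ∃ k < K, (∫ ω, ‖gradient f (x k ω)‖ ^ 2)
      ≤ L * C * γ + 2 * (1 + L * γ ^ 2 * A) ^ K * (f x0 - finf) / (γ * K) := by
  classical
  have hgc : Continuous (gradient f) :=
    (LipschitzWith.of_dist_le_mul (K := ⟨L, hL.le⟩) (fun a b => by
      rw [dist_eq_norm, dist_eq_norm]; exact hlip a b)).continuous
  -- gradient norm squared bound
  have hgradsq : ∀ z, ‖gradient f z‖ ^ 2 ≤ 2 * L * (f z - finf) := by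
    intro z
    have h := sgd_descent hL.le hdiff hlip z (z - (1 / L) • gradient f z)
    have e1 : z - (1 / L) • gradient f z - z = -((1 / L) • gradient f z) := by abel
    rw [e1, inner_neg_right, real_inner_smul_right, real_inner_self_eq_norm_sq,
      norm_neg, norm_smul, Real.norm_eq_abs, abs_of_nonneg (by positivity : (0:ℝ) ≤ 1 / L),
      mul_pow] at h
    have h2 := hbd (z - (1 / L) • gradient f z)
    have hL' : L ≠ 0 := hL.ne'
    set N := ‖gradient f z‖ ^ 2 with hN
    have ha1 : L / 2 * ((1 / L) ^ 2 * N) = 1 / (2 * L) * N := by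
      field_simp
    have h4 : 1 / L * N = 2 * (1 / (2 * L) * N) := by field_simp
    have h3 : 1 / (2 * L) * N ≤ f z - finf := by linarith
    have h5 := mul_le_mul_of_nonneg_left h3 (by positivity : (0:ℝ) ≤ 2 * L)
    have h6 : 2 * L * (1 / (2 * L) * N) = N := by field_simp
    linarith
  -- basic measurability / integrability facts
  have hamz : ∀ k, AEStronglyMeasurable (fun ω => gradient f (x k ω)) volume :=
    fun k => (hgc.measurable.comp (hxm k)).aestronglyMeasurable
  have hMa : ∀ k, MemLp (fun ω => gradient f (x k ω)) 2 volume := by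
    intro k
    rw [memLp_two_iff_integrable_sq_norm (hamz k)]
    refine Integrable.mono' (((hfint k).sub (integrable_const finf)).const_mul (2 * L)) ?_ ?_
    · exact ((hamz k).norm.mul (hamz k).norm).congr
        (by filter_upwards with ω; simp [pow_two])
    · filter_upwards with ω
      rw [Real.norm_eq_abs, abs_of_nonneg (by positivity)]
      exact hgradsq _
  have hintE : ∀ k, Integrable (fun ω => ‖gradient f (x k ω)‖ ^ 2) volume :=
    fun k => (memLp_two_iff_integrable_sq_norm (hamz k)).mp (hMa k)
  have hintg2 : ∀ k, Integrable (fun ω => ‖g k ω‖ ^ 2) volume :=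
    fun k => (memLp_two_iff_integrable_sq_norm (hg2 k).aestronglyMeasurable).mp (hg2 k)
  have hinner_int : ∀ k, Integrable (fun ω => ⟪gradient f (x k ω), g k ω⟫_ℝ) volume :=
    fun k => sgd_integrable_inner_of_memL2 (hMa k) (hg2 k)
  have hEnonneg : ∀ k, (0:ℝ) ≤ ∫ ω, ‖gradient f (x k ω)‖ ^ 2 :=
    fun k => integral_nonneg fun ω => by positivity
  have hm : ∀ k, MeasurableSpace.comap (x k)
      (inferInstance : MeasurableSpace (EuclideanSpace ℝ (Fin d)))
      ≤ (inferInstance : MeasurableSpace Ω) := fun k => (hxm k).comap_le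
  -- the cross term
  have hcross : ∀ k, (∫ ω, ⟪gradient f (x k ω), g k ω⟫_ℝ)
      = ∫ ω, ‖gradient f (x k ω)‖ ^ 2 := by
    intro k
    set m := MeasurableSpace.comap (x k)
      (inferInstance : MeasurableSpace (EuclideanSpace ℝ (Fin d))) with hmdef
    haveI : SigmaFinite (volume.trim (hm k)) := by infer_instance
    have hxk_m : Measurable[m] (x k) := measurable_iff_comap_le.mpr le_rfl
    have hsm_a : StronglyMeasurable[m] (fun ω => gradient f (x k ω)) :=
      (hgc.measurable.comp hxk_m).stronglyMeasurable
    set e : Fin d → EuclideanSpace ℝ (Fin d) := fun i => EuclideanSpace.single i (1:ℝ) with he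
    have hkey : ∀ i : Fin d,
        (∫ ω, ⟪e i, gradient f (x k ω)⟫_ℝ * ⟪e i, g k ω⟫_ℝ)
          = ∫ ω, ⟪e i, gradient f (x k ω)⟫_ℝ * ⟪e i, gradient f (x k ω)⟫_ℝ := by
      intro i
      set T : EuclideanSpace ℝ (Fin d) →L[ℝ] ℝ := innerSL ℝ (e i) with hT
      have hTapp : ∀ u, T u = ⟪e i, u⟫_ℝ := fun u => rfl
      have hai2 : MemLp (fun ω => ⟪e i, gradient f (x k ω)⟫_ℝ) 2 volume :=
        (hMa k).const_inner (e i)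
      have hgi2 : MemLp (fun ω => ⟪e i, g k ω⟫_ℝ) 2 volume :=
        (hg2 k).const_inner (e i)
      have hfg_int : Integrable
          (fun ω => ⟪e i, gradient f (x k ω)⟫_ℝ * ⟪e i, g k ω⟫_ℝ) volume := by
        have := sgd_integrable_inner_of_memL2 (E := ℝ) hai2 hgi2
        simpa [RCLike.inner_apply, -inner_gradient_left, -inner_gradient_right, mul_comm, pow_two] using this
      have hgi : (volume[fun ω => ⟪e i, g k ω⟫_ℝ|m])
          =ᵐ[volume] fun ω => ⟪e i, gradient f (x k ω)⟫_ℝ := by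
        have h1 := (sgd_condexp_clm_comp (hm k) T ((hg2 k).integrable one_le_two)).symm
        refine h1.trans ?_
        filter_upwards [hunb k] with ω hω
        simp only [hTapp]
        rw [hω]
      have hsm_ai : StronglyMeasurable[m] (fun ω => ⟪e i, gradient f (x k ω)⟫_ℝ) :=
        T.continuous.comp_stronglyMeasurable hsm_a
      have hpull := condExp_mul_of_stronglyMeasurable_left (μ := volume) (m := m) hsm_ai
        (by exact hfg_int) (hgi2.integrable one_le_two)
      rw [← integral_condExp (μ := volume) (hm k)
        (f := fun ω => ⟪e i, gradient f (x k ω)⟫_ℝ * ⟪e i, g k ω⟫_ℝ)]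
      refine integral_congr_ae ?_
      refine hpull.trans ?_
      filter_upwards [hgi] with ω hω
      simp only [Pi.mul_apply]
      rw [hω]
    have hsum1 : (fun ω => ⟪gradient f (x k ω), g k ω⟫_ℝ)
        = fun ω => ∑ i, ⟪e i, gradient f (x k ω)⟫_ℝ * ⟪e i, g k ω⟫_ℝ := by
      funext ω
      rw [PiLp.inner_apply]
      refine Finset.sum_congr rfl fun i _ => ?_
      simp [he, EuclideanSpace.inner_single_left, RCLike.inner_apply, -inner_gradient_left, -inner_gradient_right, mul_comm, pow_two]
    have hsum2 : (fun ω => ‖gradient f (x k ω)‖ ^ 2)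
        = fun ω => ∑ i, ⟪e i, gradient f (x k ω)⟫_ℝ * ⟪e i, gradient f (x k ω)⟫_ℝ := by
      funext ω
      rw [← real_inner_self_eq_norm_sq, PiLp.inner_apply]
      refine Finset.sum_congr rfl fun i _ => ?_
      simp [he, EuclideanSpace.inner_single_left, RCLike.inner_apply, -inner_gradient_left, -inner_gradient_right, mul_comm, pow_two]
    have hint1 : ∀ i : Fin d, Integrable
        (fun ω => ⟪e i, gradient f (x k ω)⟫_ℝ * ⟪e i, g k ω⟫_ℝ) volume := by
      intro i
      have := sgd_integrable_inner_of_memL2 (E := ℝ)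
        ((hMa k).const_inner (e i)) ((hg2 k).const_inner (e i))
      simpa [RCLike.inner_apply, -inner_gradient_left, -inner_gradient_right, mul_comm, pow_two] using this
    have hint2 : ∀ i : Fin d, Integrable
        (fun ω => ⟪e i, gradient f (x k ω)⟫_ℝ * ⟪e i, gradient f (x k ω)⟫_ℝ) volume := by
      intro i
      have := sgd_integrable_inner_of_memL2 (E := ℝ)
        ((hMa k).const_inner (e i)) ((hMa k).const_inner (e i))
      simpa [RCLike.inner_apply, -inner_gradient_left, -inner_gradient_right, mul_comm, pow_two] using this
    rw [hsum1, hsum2, integral_finset_sum _ (fun i _ => hint1 i),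
      integral_finset_sum _ (fun i _ => hint2 i)]
    exact Finset.sum_congr rfl fun i _ => hkey i
  -- second moment bound
  have hS : ∀ k, (∫ ω, ‖g k ω‖ ^ 2)
      ≤ 2 * A * ((∫ ω, f (x k ω)) - finf) + B * (∫ ω, ‖gradient f (x k ω)‖ ^ 2) + C := by
    intro k
    haveI : SigmaFinite (volume.trim (hm k)) := by infer_instance
    have hInt1 : Integrable (fun ω => 2 * A * (f (x k ω) - finf)) volume :=
      ((hfint k).sub (integrable_const finf)).const_mul (2 * A)
    have hInt2 : Integrable (fun ω => B * ‖gradient f (x k ω)‖ ^ 2) volume :=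
      (hintE k).const_mul B
    have hInt12 : Integrable (fun ω =>
        2 * A * (f (x k ω) - finf) + B * ‖gradient f (x k ω)‖ ^ 2) volume :=
      hInt1.add hInt2
    have hRHSint : Integrable (fun ω =>
        2 * A * (f (x k ω) - finf) + B * ‖gradient f (x k ω)‖ ^ 2 + C) volume :=
      hInt12.add (integrable_const C)
    have h0 : (∫ ω, ‖g k ω‖ ^ 2)
        = ∫ ω, (volume[(fun ω' => ‖g k ω'‖ ^ 2)|MeasurableSpace.comap (x k)
            (inferInstance : MeasurableSpace (EuclideanSpace ℝ (Fin d)))]) ω :=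
      (integral_condExp (μ := volume) (hm k) (f := fun ω' => ‖g k ω'‖ ^ 2)).symm
    have h1 := integral_mono_ae integrable_condExp hRHSint (hES k)
    beta_reduce at h1
    have h2 : (∫ ω, (2 * A * (f (x k ω) - finf) + B * ‖gradient f (x k ω)‖ ^ 2 + C))
        = 2 * A * ((∫ ω, f (x k ω)) - finf) + B * (∫ ω, ‖gradient f (x k ω)‖ ^ 2) + C := by
      rw [integral_add hInt12 (integrable_const C),
        integral_add hInt1 hInt2, integral_const_mul, integral_const_mul,
        integral_sub (hfint k) (integrable_const finf), integral_const, integral_const]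
      simp [measure_univ]
    rw [h0]
    rw [h2] at h1
    exact h1
  -- one-step expected descent
  have hstep : ∀ k, (∫ ω, f (x (k + 1) ω))
      ≤ (∫ ω, f (x k ω)) - γ * (∫ ω, ‖gradient f (x k ω)‖ ^ 2)
        + L / 2 * (γ ^ 2 * ∫ ω, ‖g k ω‖ ^ 2) := by
    intro k
    have hpt : ∀ ω, f (x (k + 1) ω)
        ≤ f (x k ω) - γ * ⟪gradient f (x k ω), g k ω⟫_ℝ
          + L / 2 * (γ ^ 2 * ‖g k ω‖ ^ 2) := by
      intro ω
      rw [hupd k ω]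
      have h := sgd_descent hL.le hdiff hlip (x k ω) (x k ω - γ • g k ω)
      have e1 : x k ω - γ • g k ω - x k ω = -(γ • g k ω) := by abel
      rw [e1, inner_neg_right, real_inner_smul_right, norm_neg, norm_smul,
        Real.norm_eq_abs, abs_of_nonneg hγ0.le, mul_pow] at h
      linarith
    have hInt2 : Integrable (fun ω => γ * ⟪gradient f (x k ω), g k ω⟫_ℝ) volume :=
      (hinner_int k).const_mul γ
    have hInt3 : Integrable (fun ω => L / 2 * (γ ^ 2 * ‖g k ω‖ ^ 2)) volume :=
      ((hintg2 k).const_mul (γ ^ 2)).const_mul (L / 2)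
    have hIntsub : Integrable (fun ω =>
        f (x k ω) - γ * ⟪gradient f (x k ω), g k ω⟫_ℝ) volume := (hfint k).sub hInt2
    have h := integral_mono (hfint (k + 1)) (hIntsub.add hInt3) hpt
    beta_reduce at h
    have heq : (∫ ω, (f (x k ω) - γ * ⟪gradient f (x k ω), g k ω⟫_ℝ
        + L / 2 * (γ ^ 2 * ‖g k ω‖ ^ 2)))
        = (∫ ω, f (x k ω)) - γ * (∫ ω, ⟪gradient f (x k ω), g k ω⟫_ℝ)
          + L / 2 * (γ ^ 2 * ∫ ω, ‖g k ω‖ ^ 2) := by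
      rw [integral_add hIntsub hInt3, integral_sub (hfint k) hInt2,
        integral_const_mul, integral_const_mul, integral_const_mul]
    rw [hcross k] at heq
    exact le_trans h (le_of_eq heq)
  -- the recursion for δ
  have hδnn : ∀ k, (0:ℝ) ≤ (∫ ω, f (x k ω)) - finf := by
    intro k
    have h := integral_mono (integrable_const finf) (hfint k) (fun ω => hbd (x k ω))
    simp only [integral_const, measure_univ, probReal_univ, ENNReal.toReal_one, one_smul] at h
    linarith
  have hγBL : γ * (B * L) ≤ 1 := by
    rcases eq_or_lt_of_le hB with h | h
    · rw [← h]; simp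
    · have hBL : 0 < B * L := mul_pos h hL
      rw [le_div_iff₀ hBL] at hγB
      exact hγB
  have hrec : ∀ k, ((∫ ω, f (x (k + 1) ω)) - finf)
      ≤ (1 + L * γ ^ 2 * A) * ((∫ ω, f (x k ω)) - finf)
        - γ / 2 * (∫ ω, ‖gradient f (x k ω)‖ ^ 2) + L * γ ^ 2 * C / 2 := by
    intro k
    have h1 := hstep k
    have h2 := hS k
    have h3 : L / 2 * (γ ^ 2 * ∫ ω, ‖g k ω‖ ^ 2)
        ≤ L / 2 * (γ ^ 2 * (2 * A * ((∫ ω, f (x k ω)) - finf)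
          + B * (∫ ω, ‖gradient f (x k ω)‖ ^ 2) + C)) := by
      apply mul_le_mul_of_nonneg_left ?_ (by positivity)
      exact mul_le_mul_of_nonneg_left h2 (by positivity)
    have h4 : L / 2 * (γ ^ 2 * (B * ∫ ω, ‖gradient f (x k ω)‖ ^ 2))
        ≤ γ / 2 * ∫ ω, ‖gradient f (x k ω)‖ ^ 2 := by
      have hc : L / 2 * (γ ^ 2 * B) ≤ γ / 2 := by nlinarith
      calc L / 2 * (γ ^ 2 * (B * ∫ ω, ‖gradient f (x k ω)‖ ^ 2))
          = (L / 2 * (γ ^ 2 * B)) * ∫ ω, ‖gradient f (x k ω)‖ ^ 2 := by ring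
        _ ≤ γ / 2 * ∫ ω, ‖gradient f (x k ω)‖ ^ 2 :=
            mul_le_mul_of_nonneg_right hc (hEnonneg k)
    ring_nf at h1 h3 h4 ⊢
    linarith
  have hδ0val : (∫ ω, f (x 0 ω)) - finf = f x0 - finf := by
    congr 1
    have h : (fun ω => f (x 0 ω)) = fun _ω : Ω => f x0 := by funext ω; rw [hx0]
    rw [h, integral_const]
    simp [measure_univ]
  have hr1 : (1:ℝ) ≤ 1 + L * γ ^ 2 * A := by
    nlinarith [mul_nonneg (mul_nonneg hL.le (sq_nonneg γ)) hA]
  obtain ⟨k, hkK, hk⟩ := sgd_min_extract (c := L * γ ^ 2 * C / 2) hr1 hγ0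
    (fun k => (∫ ω, f (x k ω)) - finf) (fun k => ∫ ω, ‖gradient f (x k ω)‖ ^ 2)
    hδnn hrec K hK
  refine ⟨k, hkK, ?_⟩
  rw [hδ0val] at hk
  have heq2 : 2 * (L * γ ^ 2 * C / 2) / γ = L * C * γ := by
    rw [div_eq_iff hγ0.ne']; ring
  rw [heq2] at hk
  exact hk
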